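/- In the sparse altered Hamiltonian setup, the expectation of W(ω)ᵀW(ω) over ω equals H; that is, for every pair of indices β', β one has E_ω[ (W(ω)ᵀ W(ω))_{β',β} ] = E_β if β' = β, and 0 otherwise, so that E_ω[WᵀW] = diagonal(E) = H. -/

import Mathlib

open MeasureTheory ProbabilityTheory Matrix

open scoped ENNReal NNReal
open Real

lemma aux_int_mul_exp {b : ℝ} (hb : 0 < b) :
    ∫ x : ℝ, x * Real.exp (-b * x ^ 2) = 0 := by
  have hderiv : ∀ x : ℝ, HasDerivAt (fun y : ℝ => -(2 * b)⁻¹ * Real.exp (-b * y ^ 2))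
      (x * Real.exp (-b * x ^ 2)) x := by
    intro x
    have h1 : HasDerivAt (fun y : ℝ => -b * y ^ 2) (-b * (2 * x)) x := by
      simpa using (HasDerivAt.const_mul (-b) (hasDerivAt_pow 2 x))
    have h2 := HasDerivAt.const_mul (-(2 * b)⁻¹) h1.exp
    refine h2.congr_deriv ?_
    field_simp
  exact integral_eq_zero_of_hasDerivAt_of_integrable hderiv
    (integrable_mul_exp_neg_mul_sq hb)
    ((integrable_exp_neg_mul_sq hb).const_mul _)

lemma aux_integrable_sq_exp {b : ℝ} (hb : 0 < b) :
    Integrable fun x : ℝ => x ^ 2 * Real.exp (-b * x ^ 2) := by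
  have hb2 : 0 < b / 2 := by linarith
  refine Integrable.mono' ((integrable_exp_neg_mul_sq hb2).const_mul (2 / b))
    ?_ (Filter.Eventually.of_forall fun x => ?_)
  · exact ((continuous_pow 2).mul
      (Real.continuous_exp.comp (by continuity))).aestronglyMeasurable
  · rw [Real.norm_eq_abs, abs_of_nonneg (by positivity)]
    have hy : b / 2 * x ^ 2 ≤ Real.exp (b / 2 * x ^ 2) :=
      le_trans (by linarith [Real.add_one_le_exp (b / 2 * x ^ 2)]) le_rfl
    have hE : (0:ℝ) < Real.exp (b / 2 * x ^ 2) := Real.exp_pos _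
    have h4 : x ^ 2 ≤ 2 / b * Real.exp (b / 2 * x ^ 2) := by
      calc x ^ 2 = 2 / b * (b / 2 * x ^ 2) := by field_simp
        _ ≤ 2 / b * Real.exp (b / 2 * x ^ 2) :=
            mul_le_mul_of_nonneg_left hy (by positivity)
    have key : x ^ 2 * Real.exp (-(b / 2) * x ^ 2) ≤ 2 / b := by
      calc x ^ 2 * Real.exp (-(b / 2) * x ^ 2)
          = x ^ 2 * (Real.exp (b / 2 * x ^ 2))⁻¹ := by
            rw [← Real.exp_neg]; ring_nf
        _ ≤ (2 / b * Real.exp (b / 2 * x ^ 2)) * (Real.exp (b / 2 * x ^ 2))⁻¹ :=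
            mul_le_mul_of_nonneg_right h4 (by positivity)
        _ = 2 / b := by rw [mul_assoc, mul_inv_cancel₀ (ne_of_gt hE), mul_one]
    calc x ^ 2 * Real.exp (-b * x ^ 2)
        = (x ^ 2 * Real.exp (-(b / 2) * x ^ 2)) * Real.exp (-(b / 2) * x ^ 2) := by
          rw [mul_assoc, ← Real.exp_add]; ring_nf
      _ ≤ 2 / b * Real.exp (-(b / 2) * x ^ 2) :=
          mul_le_mul_of_nonneg_right key (Real.exp_nonneg _)

lemma aux_int_sq_exp {b : ℝ} (hb : 0 < b) :
    ∫ x : ℝ, x ^ 2 * Real.exp (-b * x ^ 2) = Real.sqrt (π / b) / (2 * b) := by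
  have hderiv : ∀ x : ℝ, HasDerivAt (fun y : ℝ => y * Real.exp (-b * y ^ 2))
      (Real.exp (-b * x ^ 2) - 2 * b * (x ^ 2 * Real.exp (-b * x ^ 2))) x := by
    intro x
    have h1 : HasDerivAt (fun y : ℝ => -b * y ^ 2) (-b * (2 * x)) x := by
      simpa using (HasDerivAt.const_mul (-b) (hasDerivAt_pow 2 x))
    have h2 := (hasDerivAt_id' (x := x)).mul h1.exp
    refine h2.congr_deriv ?_
    ring
  have hint : Integrable fun x : ℝ =>
      Real.exp (-b * x ^ 2) - 2 * b * (x ^ 2 * Real.exp (-b * x ^ 2)) :=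
    (integrable_exp_neg_mul_sq hb).sub ((aux_integrable_sq_exp hb).const_mul _)
  have h0 := integral_eq_zero_of_hasDerivAt_of_integrable hderiv hint
    (integrable_mul_exp_neg_mul_sq hb)
  rw [integral_sub (integrable_exp_neg_mul_sq hb) ((aux_integrable_sq_exp hb).const_mul _),
    integral_const_mul, integral_gaussian] at h0
  have h2b : (2 : ℝ) * b ≠ 0 := by positivity
  field_simp at h0 ⊢
  linarith

lemma aux_integrable_dirac {f : ℝ → ℝ} (hf : Measurable f) :
    Integrable f (MeasureTheory.Measure.dirac 0) :=
  ⟨hf.aestronglyMeasurable, by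
    rw [HasFiniteIntegral, lintegral_dirac]; exact ENNReal.coe_lt_top⟩

/-- toNNReal coercion of the pdf. -/
lemma aux_gauss_withDensity (v : ℝ≥0) (hv : v ≠ 0) :
    gaussianReal 0 v = MeasureTheory.Measure.withDensity volume
      (fun x => ((Real.toNNReal (gaussianPDFReal 0 v x) : ℝ≥0) : ℝ≥0∞)) := by
  rw [gaussianReal_of_var_ne_zero _ hv]
  rfl

lemma aux_pdf_eq (v : ℝ≥0) (x : ℝ) :
    gaussianPDFReal 0 v x = (Real.sqrt (2 * π * v))⁻¹ * Real.exp (-(2 * (v:ℝ))⁻¹ * x ^ 2) := by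
  rw [gaussianPDFReal]
  congr 1
  rw [sub_zero]
  by_cases h : (v:ℝ) = 0
  · simp [h]
  · field_simp

lemma gauss_integrable_id (v : ℝ≥0) : Integrable (fun x => x) (gaussianReal 0 v) := by
  by_cases hv : v = 0
  · simp only [hv, gaussianReal, if_pos rfl]
    exact aux_integrable_dirac measurable_id
  · have hv' : (0:ℝ) < v := lt_of_le_of_ne v.coe_nonneg (by exact_mod_cast (Ne.symm hv))
    have hb : (0:ℝ) < (2 * (v:ℝ))⁻¹ := by positivity
    rw [aux_gauss_withDensity v hv,
      integrable_withDensity_iff_integrable_smul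
        ((measurable_gaussianPDFReal 0 v).real_toNNReal)]
    have : (fun x : ℝ => (Real.toNNReal (gaussianPDFReal 0 v x) : ℝ≥0) • x)
        = fun x => (Real.sqrt (2 * π * v))⁻¹ * (x * Real.exp (-(2 * (v:ℝ))⁻¹ * x ^ 2)) := by
      funext x
      have hcoe : ((Real.toNNReal (gaussianPDFReal 0 v x) : ℝ≥0) : ℝ)
          = gaussianPDFReal 0 v x :=
        Real.coe_toNNReal _ (gaussianPDFReal_nonneg 0 v x)
      rw [NNReal.smul_def, smul_eq_mul, hcoe, aux_pdf_eq]
      ring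
    rw [this]
    exact (integrable_mul_exp_neg_mul_sq hb).const_mul _

lemma gauss_integrable_sq (v : ℝ≥0) : Integrable (fun x => x ^ 2) (gaussianReal 0 v) := by
  by_cases hv : v = 0
  · simp only [hv, gaussianReal, if_pos rfl]
    exact aux_integrable_dirac (measurable_id.pow_const 2)
  · have hv' : (0:ℝ) < v := lt_of_le_of_ne v.coe_nonneg (by exact_mod_cast (Ne.symm hv))
    have hb : (0:ℝ) < (2 * (v:ℝ))⁻¹ := by positivity
    rw [aux_gauss_withDensity v hv,
      integrable_withDensity_iff_integrable_smul
        ((measurable_gaussianPDFReal 0 v).real_toNNReal)]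
    have : (fun x : ℝ => (Real.toNNReal (gaussianPDFReal 0 v x) : ℝ≥0) • x ^ 2)
        = fun x => (Real.sqrt (2 * π * v))⁻¹ * (x ^ 2 * Real.exp (-(2 * (v:ℝ))⁻¹ * x ^ 2)) := by
      funext x
      have hcoe : ((Real.toNNReal (gaussianPDFReal 0 v x) : ℝ≥0) : ℝ)
          = gaussianPDFReal 0 v x :=
        Real.coe_toNNReal _ (gaussianPDFReal_nonneg 0 v x)
      rw [NNReal.smul_def, smul_eq_mul, hcoe, aux_pdf_eq]
      ring
    rw [this]
    exact (aux_integrable_sq_exp hb).const_mul _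

lemma gauss_integral_id (v : ℝ≥0) : ∫ x, x ∂(gaussianReal 0 v) = 0 := by
  by_cases hv : v = 0
  · simp [hv, gaussianReal]
  · have hv' : (0:ℝ) < v := lt_of_le_of_ne v.coe_nonneg (by exact_mod_cast (Ne.symm hv))
    have hb : (0:ℝ) < (2 * (v:ℝ))⁻¹ := by positivity
    rw [aux_gauss_withDensity v hv,
      integral_withDensity_eq_integral_smul
        ((measurable_gaussianPDFReal 0 v).real_toNNReal)]
    have : (fun x : ℝ => (Real.toNNReal (gaussianPDFReal 0 v x) : ℝ≥0) • x)
        = fun x => (Real.sqrt (2 * π * v))⁻¹ * (x * Real.exp (-(2 * (v:ℝ))⁻¹ * x ^ 2)) := by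
      funext x
      have hcoe : ((Real.toNNReal (gaussianPDFReal 0 v x) : ℝ≥0) : ℝ)
          = gaussianPDFReal 0 v x :=
        Real.coe_toNNReal _ (gaussianPDFReal_nonneg 0 v x)
      rw [NNReal.smul_def, smul_eq_mul, hcoe, aux_pdf_eq]
      ring
    rw [this, integral_const_mul, aux_int_mul_exp hb, mul_zero]

lemma gauss_integral_sq (v : ℝ≥0) : ∫ x, x ^ 2 ∂(gaussianReal 0 v) = v := by
  by_cases hv : v = 0
  · simp [hv, gaussianReal]
  · have hv' : (0:ℝ) < v := lt_of_le_of_ne v.coe_nonneg (by exact_mod_cast (Ne.symm hv))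
    have hb : (0:ℝ) < (2 * (v:ℝ))⁻¹ := by positivity
    rw [aux_gauss_withDensity v hv,
      integral_withDensity_eq_integral_smul
        ((measurable_gaussianPDFReal 0 v).real_toNNReal)]
    have : (fun x : ℝ => (Real.toNNReal (gaussianPDFReal 0 v x) : ℝ≥0) • x ^ 2)
        = fun x => (Real.sqrt (2 * π * v))⁻¹ * (x ^ 2 * Real.exp (-(2 * (v:ℝ))⁻¹ * x ^ 2)) := by
      funext x
      have hcoe : ((Real.toNNReal (gaussianPDFReal 0 v x) : ℝ≥0) : ℝ)
          = gaussianPDFReal 0 v x :=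
        Real.coe_toNNReal _ (gaussianPDFReal_nonneg 0 v x)
      rw [NNReal.smul_def, smul_eq_mul, hcoe, aux_pdf_eq]
      ring
    rw [this, integral_const_mul, aux_int_sq_exp hb]
    have h1 : π / ((2 * (v:ℝ))⁻¹) = 2 * π * v := by field_simp
    have h2 : (2 : ℝ) * ((2 * (v:ℝ))⁻¹) = (v:ℝ)⁻¹ := by field_simp
    rw [h1, h2]
    have h3 : Real.sqrt (2 * π * v) ≠ 0 := by
      refine ne_of_gt (Real.sqrt_pos.mpr ?_)
      positivity
    field_simp

lemma rv_integrable {Ω : Type*} [MeasureSpace Ω] {X : Ω → ℝ} (hX : Measurable X) {v : ℝ≥0}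
    (hd : Measure.map X ℙ = gaussianReal 0 v) : Integrable X ℙ := by
  have h := (integrable_map_measure aestronglyMeasurable_id hX.aemeasurable).mp
    (by rw [hd]; exact gauss_integrable_id v)
  simpa [Function.comp] using h

lemma rv_integrable_sq {Ω : Type*} [MeasureSpace Ω] {X : Ω → ℝ} (hX : Measurable X) {v : ℝ≥0}
    (hd : Measure.map X ℙ = gaussianReal 0 v) : Integrable (fun ω => X ω ^ 2) ℙ := by
  have h := (integrable_map_measure (g := fun x : ℝ => x ^ 2)
    (continuous_pow 2).aestronglyMeasurable hX.aemeasurable).mp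
    (by rw [hd]; exact gauss_integrable_sq v)
  exact h

lemma rv_mean {Ω : Type*} [MeasureSpace Ω] {X : Ω → ℝ} (hX : Measurable X) {v : ℝ≥0}
    (hd : Measure.map X ℙ = gaussianReal 0 v) : ∫ ω, X ω ∂ℙ = 0 := by
  have h := integral_map (μ := ℙ) (φ := X) hX.aemeasurable (f := fun x : ℝ => x)
    continuous_id.aestronglyMeasurable
  rw [← h, hd, gauss_integral_id]

lemma rv_sq_mean {Ω : Type*} [MeasureSpace Ω] {X : Ω → ℝ} (hX : Measurable X) {v : ℝ≥0}
    (hd : Measure.map X ℙ = gaussianReal 0 v) : ∫ ω, X ω ^ 2 ∂ℙ = v := by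
  have h := integral_map (μ := ℙ) (φ := X) hX.aemeasurable (f := fun x : ℝ => x ^ 2)
    (continuous_pow 2).aestronglyMeasurable
  rw [← h, hd, gauss_integral_sq]

/-- The random perturbation matrix `W(ω)` with entries `W(ω)_{α,β} = T_{α,β} f_{α,β}(ω)`. -/
noncomputable def Wmat {B : Type*} {Ω : Type*} (T : B → B → ℝ) (f : B → B → Ω → ℝ)
    (ω : Ω) : Matrix B B ℝ :=
  Matrix.of fun α β => T α β * f α β ω

/-- In the sparse altered Hamiltonian setup (entries of `W` are
`T_{α,β} f_{α,β}` with the `f_{α,β}` jointly independent centered Gaussians of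
variance `E_β / t_β`), the expectation of `WᵀW` is `H = diagonal E`: entrywise,
`E_ω[(WᵀW)_{β',β}] = E_β` if `β' = β` and `0` otherwise. -/
theorem expectation_WtW_eq_diagonal
    {B : Type*} [Fintype B] [DecidableEq B]
    (E : B → ℝ) (hE : ∀ β, 0 ≤ E β)
    (T : B → B → ℝ) (hT01 : ∀ α β, T α β = 0 ∨ T α β = 1)
    (t : B → ℝ) (ht : ∀ β, t β = ∑ α, T α β) (ht1 : ∀ β, 1 ≤ t β)
    {Ω : Type*} [MeasureSpace Ω] [IsProbabilityMeasure (ℙ : Measure Ω)]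
    (f : B → B → Ω → ℝ)
    (hmeas : ∀ α β, Measurable (f α β))
    (hindep : iIndepFun
      (fun p : B × B => f p.1 p.2) ℙ)
    (hdist : ∀ α β, Measure.map (f α β) ℙ = gaussianReal 0 (Real.toNNReal (E β / t β))) :
    ∀ β' β, (∫ ω, ((Wmat T f ω)ᵀ * Wmat T f ω) β' β ∂ℙ) = Matrix.diagonal E β' β := by

  intro β' β
  have htpos : ∀ γ, (0:ℝ) < t γ := fun γ => lt_of_lt_of_le one_pos (ht1 γ)
  have hvE : ∀ γ, ((Real.toNNReal (E γ / t γ)) : ℝ) = E γ / t γ :=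
    fun γ => Real.coe_toNNReal _ (div_nonneg (hE γ) (htpos γ).le)
  have hintf : ∀ α γ, Integrable (f α γ) ℙ :=
    fun α γ => rv_integrable (hmeas α γ) (hdist α γ)
  have hprod : ∀ α : B, Integrable (fun ω => f α β' ω * f α β ω) ℙ := by
    intro α
    by_cases hββ : β' = β
    · subst hββ
      simpa [pow_two] using rv_integrable_sq (hmeas α β') (hdist α β')
    · have hne : ((α, β') : B × B) ≠ (α, β) := by simp [Prod.ext_iff, hββ]
      have hind : IndepFun (f α β') (f α β) ℙ := hindep.indepFun hne
      simpa [Pi.mul_def] using hind.integrable_mul (hintf α β') (hintf α β)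
  have hW : ∀ ω, ((Wmat T f ω)ᵀ * Wmat T f ω) β' β
      = ∑ α, (T α β' * T α β) * (f α β' ω * f α β ω) := by
    intro ω
    simp only [Wmat, Matrix.mul_apply, Matrix.transpose_apply, Matrix.of_apply]
    exact Finset.sum_congr rfl fun α _ => by ring
  simp_rw [hW]
  rw [integral_finset_sum _ (fun α _ => (hprod α).const_mul _)]
  simp_rw [integral_const_mul]
  by_cases hββ : β' = β
  · subst hββ
    have hmean : ∀ α : B, ∫ ω, f α β' ω * f α β' ω ∂ℙ = E β' / t β' := by
      intro α
      have h1 : (fun ω => f α β' ω * f α β' ω) = fun ω => f α β' ω ^ 2 := by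
        funext ω; ring
      rw [h1, rv_sq_mean (hmeas α β') (hdist α β'), hvE]
    simp_rw [hmean]
    have hTT : ∀ α, T α β' * T α β' = T α β' := fun α => by
      rcases hT01 α β' with h | h <;> simp [h]
    simp_rw [hTT]
    rw [← Finset.sum_mul, ← ht β', Matrix.diagonal_apply_eq]
    field_simp
    rw [mul_comm, mul_div_assoc, div_self (ne_of_gt (htpos β')), mul_one]
  · have hmean : ∀ α : B, ∫ ω, f α β' ω * f α β ω ∂ℙ = 0 := by
      intro α
      have hne : ((α, β') : B × B) ≠ (α, β) := by simp [Prod.ext_iff, hββ]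
      have hind : IndepFun (f α β') (f α β) ℙ := hindep.indepFun hne
      have := hind.integral_mul_eq_mul_integral (hintf α β').1 (hintf α β).1
      simpa [Pi.mul_def, rv_mean (hmeas α β') (hdist α β'),
        rv_mean (hmeas α β) (hdist α β)] using this
    simp_rw [hmean, mul_zero]
    rw [Matrix.diagonal_apply_ne _ hββ, Finset.sum_const_zero]
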